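/- (Barrow-type inequality with signed angle bisectors.) Let A, B, C be affinely independent points of the Euclidean plane and let M be a point, distinct from A, B and C, whose barycentric coordinates (w_A, w_B, w_C) with respect to (A, B, C) satisfy w_A ≤ 0 or w_B ≤ 0 or w_C ≤ 0 (i.e. M does not lie in the open interior of the triangle ABC). Write R_A = |MA|, R_B = |MB|, R_C = |MC|, and let ℓ_a = (2·R_B·R_C/(R_B + R_C))·cos(∠BMC/2), ℓ_b = (2·R_C·R_A/(R_C + R_A))·cos(∠CMA/2), ℓ_c = (2·R_A·R_B/(R_A + R_B))·cos(∠AMB/2). Define the signed angle bisectors ℓ'_a = −ℓ_a if w_A < 0 and ℓ'_a = ℓ_a otherwise, ℓ'_b = −ℓ_b if w_B < 0 and ℓ'_b = ℓ_b otherwise, ℓ'_c = −ℓ_c if w_C < 0 and ℓ'_c = ℓ_c otherwise. Then R_A + R_B + R_C ≥ (√(R_C/R_B) + √(R_B/R_C))·ℓ'_a + (√(R_C/R_A) + √(R_A/R_C))·ℓ'_b + (√(R_A/R_B) + √(R_B/R_A))·ℓ'_c. -/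

import Mathlib

open EuclideanGeometry Real AffineMap

noncomputable section

instance : Fact (Module.finrank ℝ (EuclideanSpace ℝ (Fin 2)) = 2) := ⟨finrank_euclideanSpace_fin⟩
instance : Module.Oriented ℝ (EuclideanSpace ℝ (Fin 2)) (Fin 2) :=
  ⟨(EuclideanSpace.basisFun (Fin 2) ℝ).toBasis.orientation⟩

private lemma absadd17 {θ₁ θ₂ θ₃ : Real.Angle} (h : θ₁ + θ₂ = θ₃) (h1 : θ₁.sign = θ₃.sign)
    (h2 : θ₂.sign = θ₃.sign) (h3 : θ₃.sign ≠ 0) :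
    |θ₁.toReal| + |θ₂.toReal| = |θ₃.toReal| := by
  have hπ := Real.pi_pos
  obtain ⟨k, hk⟩ : ∃ k : ℤ, θ₁.toReal + θ₂.toReal - θ₃.toReal = 2 * π * k := by
    rw [← Real.Angle.angle_eq_iff_two_pi_dvd_sub, Real.Angle.coe_add, θ₁.coe_toReal,
      θ₂.coe_toReal, h, θ₃.coe_toReal]
  have hb : ∀ θ : Real.Angle, -π < θ.toReal ∧ θ.toReal ≤ π := fun θ =>
    ⟨Real.Angle.neg_pi_lt_toReal θ, Real.Angle.toReal_le_pi θ⟩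
  rcases hs : θ₃.sign with _ | _ | _
  · exact absurd hs h3
  · have n1 : θ₁.toReal < 0 := Real.Angle.toReal_neg_iff_sign_neg.2 (h1.trans hs)
    have n2 : θ₂.toReal < 0 := Real.Angle.toReal_neg_iff_sign_neg.2 (h2.trans hs)
    have n3 : θ₃.toReal < 0 := Real.Angle.toReal_neg_iff_sign_neg.2 hs
    have hk0 : k = 0 := by
      have l1 : (-1 : ℝ) < k := by nlinarith [(hb θ₁).1, (hb θ₂).1]
      have l2 : (k : ℝ) < 1 := by nlinarith [(hb θ₃).1]
      have l1' : (-1 : ℤ) < k := by exact_mod_cast l1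
      have l2' : k < (1 : ℤ) := by exact_mod_cast l2
      omega
    rw [hk0] at hk
    rw [abs_of_neg n1, abs_of_neg n2, abs_of_neg n3]
    push_cast at hk; linarith
  · have pos : ∀ θ : Real.Angle, θ.sign = 1 → 0 < θ.toReal ∧ θ.toReal < π := by
      intro θ hθ
      have h0 : 0 ≤ θ.toReal := Real.Angle.toReal_nonneg_iff_sign_nonneg.2 (by rw [hθ]; decide)
      have hne : θ.toReal ≠ 0 := by
        intro hz
        rw [Real.Angle.toReal_eq_zero_iff.1 hz] at hθ
        simp at hθ
      have hnpi : θ.toReal ≠ π := by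
        intro hz
        rw [Real.Angle.toReal_eq_pi_iff.1 hz] at hθ
        simp at hθ
      exact ⟨lt_of_le_of_ne h0 (Ne.symm hne), lt_of_le_of_ne (hb θ).2 hnpi⟩
    obtain ⟨p1, p1'⟩ := pos θ₁ (h1.trans hs)
    obtain ⟨p2, p2'⟩ := pos θ₂ (h2.trans hs)
    obtain ⟨p3, p3'⟩ := pos θ₃ hs
    have hk0 : k = 0 := by
      have l1 : (-1 : ℝ) < k := by nlinarith
      have l2 : (k : ℝ) < 1 := by nlinarith
      have l1' : (-1 : ℤ) < k := by exact_mod_cast l1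
      have l2' : k < (1 : ℤ) := by exact_mod_cast l2
      omega
    rw [hk0] at hk
    rw [abs_of_pos p1, abs_of_pos p2, abs_of_pos p3]
    push_cast at hk; linarith

private lemma angle_add_of_wbtw17 {B P C M : EuclideanSpace ℝ (Fin 2)} (h : Wbtw ℝ B P C)
    (hPM : P ≠ M)
    (hncol : ¬Collinear ℝ ({B, M, C} : Set (EuclideanSpace ℝ (Fin 2)))) :
    ∠ B M P + ∠ P M C = ∠ B M C := by
  have hBM : B ≠ M := by
    rintro rfl
    exact hncol ((collinear_pair ℝ B C).subset (by intro x hx; simp at hx ⊢; tauto))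
  have hCM : C ≠ M := by
    rintro rfl
    exact hncol ((collinear_pair ℝ B C).subset (by intro x hx; simp at hx ⊢; tauto))
  rcases eq_or_ne P B with rfl | hPB
  · rw [angle_self_of_ne hPM]; ring
  rcases eq_or_ne P C with rfl | hPC
  · rw [angle_self_of_ne hPM]; ring
  have hsbtw : Sbtw ℝ B P C := ⟨h, hPB, hPC⟩
  have hadd : ∡ B M P + ∡ P M C = ∡ B M C := oangle_add hBM hPM hCM
  have h3 : (∡ B M C).sign ≠ 0 := fun hz => hncol (oangle_sign_eq_zero_iff_collinear.1 hz)
  have h1 : (∡ B M P).sign = (∡ B M C).sign := hsbtw.oangle_sign_eq_left M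
  have h2 : (∡ P M C).sign = (∡ B M C).sign := hsbtw.oangle_sign_eq_right M
  rw [angle_eq_abs_oangle_toReal hBM hPM, angle_eq_abs_oangle_toReal hPM hCM,
    angle_eq_abs_oangle_toReal hBM hCM]
  exact absadd17 hadd h1 h2 h3

private lemma noncol17 {A B C M : EuclideanSpace ℝ (Fin 2)}
    (hncol : ¬Collinear ℝ ({A, B, C} : Set (EuclideanSpace ℝ (Fin 2))))
    {wA wB wC : ℝ} (hw : wA + wB + wC = 1) (hM : M = wA • A + wB • B + wC • C)
    (hwA : wA ≠ 0) : ¬Collinear ℝ ({B, M, C} : Set (EuclideanSpace ℝ (Fin 2))) := by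
  intro hc
  have hBC : B ≠ C := by
    rintro rfl
    exact hncol ((collinear_pair ℝ A B).subset (by intro x hx; simp at hx ⊢; tauto))
  have hmB : M ∈ line[ℝ, B, C] :=
    hc.mem_affineSpan_of_mem_of_ne (by simp) (by simp) (by simp) hBC
  rw [← vsub_vadd M B, vadd_left_mem_affineSpan_pair] at hmB
  obtain ⟨r, hr⟩ := hmB
  apply hncol
  apply collinear_insert_of_mem_affineSpan_pair (p₂ := B) (p₃ := C)
  rw [← vsub_vadd A B, vadd_left_mem_affineSpan_pair]
  refine ⟨(r - wC) / wA, ?_⟩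
  apply smul_right_injective (EuclideanSpace ℝ (Fin 2)) hwA
  show wA • (((r - wC) / wA) • (C -ᵥ B)) = wA • (A -ᵥ B)
  rw [smul_smul, mul_div_cancel₀ _ hwA]
  have hwB : wB = 1 - wA - wC := by linarith
  subst hM hwB
  simp only [vsub_eq_sub] at hr ⊢
  linear_combination (norm := module) hr

private lemma sbtw_pi17 {A B C M : EuclideanSpace ℝ (Fin 2)} {wA wB wC : ℝ}
    (hw : wA + wB + wC = 1) (hM : M = wA • A + wB • B + wC • C)
    (hMB : M ≠ B) (hMC : M ≠ C) (hA : wA = 0) (hB : 0 ≤ wB) (hC : 0 ≤ wC) :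
    ∠ B M C = π := by
  subst hA
  have hM2 : M = lineMap B C wC := by
    rw [lineMap_apply_module, hM, show (1 : ℝ) - wC = wB by linarith]
    module
  have hwbtw : Wbtw ℝ B M C := by
    rw [hM2]
    exact wbtw_lineMap_iff.2 (Or.inr ⟨hC, by linarith⟩)
  have hsb : Sbtw ℝ B M C := ⟨hwbtw, hMB, hMC⟩
  exact hsb.angle₁₂₃_eq_pi

private lemma angle_rel17 {A B C M : EuclideanSpace ℝ (Fin 2)}
    (hncol : ¬Collinear ℝ ({A, B, C} : Set (EuclideanSpace ℝ (Fin 2))))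
    {wA wB wC : ℝ} (hw : wA + wB + wC = 1) (hM : M = wA • A + wB • B + wC • C)
    (hMA : M ≠ A) (hMB : M ≠ B) (hMC : M ≠ C)
    (hA : wA ≤ 0) (hB : 0 ≤ wB) (hC : 0 ≤ wC) :
    ∠ C M A + ∠ A M B = ∠ B M C := by
  rcases hA.lt_or_eq with hA' | hA'
  · have ht0 : (0 : ℝ) < 1 - wA := by linarith
    have hs0 : 0 < -wA / (1 - wA) := div_pos (by linarith) ht0
    have hs1 : -wA / (1 - wA) < 1 := by rw [div_lt_one ht0]; linarith
    obtain ⟨P, hP⟩ : ∃ P : EuclideanSpace ℝ (Fin 2),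
        P = lineMap M A (-wA / (1 - wA)) := ⟨_, rfl⟩
    have hsbtw : Sbtw ℝ M P A := by
      rw [hP]; exact sbtw_lineMap_iff.2 ⟨fun h => hMA h, hs0, hs1⟩
    have hPv : P -ᵥ M = (-wA / (1 - wA)) • (A -ᵥ M) := by
      rw [hP, lineMap_apply, vadd_vsub]
    have hPM : P ≠ M := hsbtw.left_ne.symm
    have hPBC : P = lineMap B C (wC / (1 - wA)) := by
      have h1wA : (1 : ℝ) - wA ≠ 0 := by linarith
      rw [hP, lineMap_apply_module, lineMap_apply_module, hM,
        show wB = 1 - wA - wC from by linarith]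
      match_scalars <;> field_simp <;> ring
    have hwbtw : Wbtw ℝ B P C := by
      rw [hPBC]
      refine wbtw_lineMap_iff.2 (Or.inr ⟨by positivity, ?_⟩)
      rw [div_le_one ht0]; linarith
    have hncolB : ¬Collinear ℝ ({B, M, C} : Set (EuclideanSpace ℝ (Fin 2))) :=
      noncol17 hncol hw hM (ne_of_lt hA')
    have hadd : ∠ B M P + ∠ P M C = ∠ B M C := angle_add_of_wbtw17 hwbtw hPM hncolB
    have hray1 : ∠ B M P = ∠ B M A := by
      show InnerProductGeometry.angle (B -ᵥ M) (P -ᵥ M)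
          = InnerProductGeometry.angle (B -ᵥ M) (A -ᵥ M)
      rw [hPv, InnerProductGeometry.angle_smul_right_of_pos _ _ hs0]
    have hray2 : ∠ P M C = ∠ A M C := by
      show InnerProductGeometry.angle (P -ᵥ M) (C -ᵥ M)
          = InnerProductGeometry.angle (A -ᵥ M) (C -ᵥ M)
      rw [hPv, InnerProductGeometry.angle_smul_left_of_pos _ _ hs0]
    rw [hray1, hray2] at hadd
    rw [angle_comm C M A, angle_comm A M B]
    linarith
  · have hpi : ∠ B M C = π := sbtw_pi17 hw hM hMB hMC hA' hB hC
    have := angle_add_angle_eq_pi_of_angle_eq_pi A hpi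
    rw [hpi, angle_comm C M A]
    linarith

private lemma coefsimp17 {b c : ℝ} (hb : 0 < b) (hc : 0 < c) (L : ℝ) :
    (Real.sqrt (c / b) + Real.sqrt (b / c)) * (2 * b * c / (b + c) * L)
      = 2 * Real.sqrt b * Real.sqrt c * L := by
  obtain ⟨sb, hsb0, rfl⟩ : ∃ s : ℝ, 0 < s ∧ b = s ^ 2 :=
    ⟨Real.sqrt b, Real.sqrt_pos.2 hb, (Real.sq_sqrt hb.le).symm⟩
  obtain ⟨sc, hsc0, rfl⟩ : ∃ s : ℝ, 0 < s ∧ c = s ^ 2 :=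
    ⟨Real.sqrt c, Real.sqrt_pos.2 hc, (Real.sq_sqrt hc.le).symm⟩
  rw [show sc ^ 2 / sb ^ 2 = (sc / sb) ^ 2 from (div_pow sc sb 2).symm,
    show sb ^ 2 / sc ^ 2 = (sb / sc) ^ 2 from (div_pow sb sc 2).symm,
    Real.sqrt_sq (by positivity), Real.sqrt_sq (by positivity),
    Real.sqrt_sq hsb0.le, Real.sqrt_sq hsc0.le]
  have h1 : sb ≠ 0 := hsb0.ne'
  have h2 : sc ≠ 0 := hsc0.ne'
  have h3 : sb ^ 2 + sc ^ 2 ≠ 0 := by positivity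
  field_simp
  ring

private lemma master17 {a b c α β γ : ℝ} (ha : 0 ≤ a) (hb : 0 ≤ b) (hc : 0 ≤ c)
    (hrel : β + γ = α) :
    2 * Real.sqrt c * Real.sqrt a * Real.cos (β / 2)
      + 2 * Real.sqrt a * Real.sqrt b * Real.cos (γ / 2)
      - 2 * Real.sqrt b * Real.sqrt c * Real.cos (α / 2) ≤ a + b + c := by
  have hx := Real.sq_sqrt ha
  have hy := Real.sq_sqrt hb
  have hz := Real.sq_sqrt hc
  have pb := Real.sin_sq_add_cos_sq (β / 2)
  have pg := Real.sin_sq_add_cos_sq (γ / 2)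
  have hcos : Real.cos (α / 2)
      = Real.cos (β / 2) * Real.cos (γ / 2) - Real.sin (β / 2) * Real.sin (γ / 2) := by
    rw [← Real.cos_add]
    congr 1
    linarith
  have key : a + b + c
      - (2 * Real.sqrt c * Real.sqrt a * Real.cos (β / 2)
        + 2 * Real.sqrt a * Real.sqrt b * Real.cos (γ / 2)
        - 2 * Real.sqrt b * Real.sqrt c * Real.cos (α / 2))
      = (Real.sqrt a - Real.sqrt c * Real.cos (β / 2) - Real.sqrt b * Real.cos (γ / 2)) ^ 2
        + (Real.sqrt c * Real.sin (β / 2) - Real.sqrt b * Real.sin (γ / 2)) ^ 2 := by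
    rw [hcos]
    linear_combination (-1 : ℝ) * hx - hy - hz - Real.sqrt c ^ 2 * pb - Real.sqrt b ^ 2 * pg
  nlinarith [key,
    sq_nonneg (Real.sqrt a - Real.sqrt c * Real.cos (β / 2) - Real.sqrt b * Real.cos (γ / 2)),
    sq_nonneg (Real.sqrt c * Real.sin (β / 2) - Real.sqrt b * Real.sin (γ / 2))]

private lemma twobound17 {a b t : ℝ} (ha : 0 ≤ a) (hb : 0 ≤ b) (ht : t ≤ 1) :
    2 * Real.sqrt a * Real.sqrt b * t ≤ a + b := by
  have hx := Real.sq_sqrt ha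
  have hy := Real.sq_sqrt hb
  nlinarith [sq_nonneg (Real.sqrt a - Real.sqrt b), Real.sqrt_nonneg a, Real.sqrt_nonneg b,
    mul_nonneg (Real.sqrt_nonneg a) (Real.sqrt_nonneg b)]

private lemma mainineq17 {a b c α β γ wA wB wC : ℝ}
    (ha : 0 < a) (hb : 0 < b) (hc : 0 < c)
    (hα1 : 0 ≤ α) (hα2 : α ≤ π) (hβ1 : 0 ≤ β) (hβ2 : β ≤ π) (hγ1 : 0 ≤ γ) (hγ2 : γ ≤ π)
    (hw : wA + wB + wC = 1)
    (relA : wA ≤ 0 → 0 ≤ wB → 0 ≤ wC → β + γ = α)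
    (relB : wB ≤ 0 → 0 ≤ wC → 0 ≤ wA → γ + α = β)
    (relC : wC ≤ 0 → 0 ≤ wA → 0 ≤ wB → α + β = γ)
    (piA : wA = 0 → 0 ≤ wB → 0 ≤ wC → α = π)
    (piB : wB = 0 → 0 ≤ wC → 0 ≤ wA → β = π)
    (piC : wC = 0 → 0 ≤ wA → 0 ≤ wB → γ = π)
    (hout : wA ≤ 0 ∨ wB ≤ 0 ∨ wC ≤ 0) :
    (if wA < 0 then -(2 * Real.sqrt b * Real.sqrt c * Real.cos (α / 2))
        else 2 * Real.sqrt b * Real.sqrt c * Real.cos (α / 2))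
      + (if wB < 0 then -(2 * Real.sqrt c * Real.sqrt a * Real.cos (β / 2))
        else 2 * Real.sqrt c * Real.sqrt a * Real.cos (β / 2))
      + (if wC < 0 then -(2 * Real.sqrt a * Real.sqrt b * Real.cos (γ / 2))
        else 2 * Real.sqrt a * Real.sqrt b * Real.cos (γ / 2))
      ≤ a + b + c := by
  have hπ := Real.pi_pos
  have hcα : 0 ≤ Real.cos (α / 2) := Real.cos_nonneg_of_mem_Icc ⟨by linarith, by linarith⟩
  have hcβ : 0 ≤ Real.cos (β / 2) := Real.cos_nonneg_of_mem_Icc ⟨by linarith, by linarith⟩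
  have hcγ : 0 ≤ Real.cos (γ / 2) := Real.cos_nonneg_of_mem_Icc ⟨by linarith, by linarith⟩
  have hEa0 : 0 ≤ 2 * Real.sqrt b * Real.sqrt c * Real.cos (α / 2) :=
    mul_nonneg (by positivity) hcα
  have hEb0 : 0 ≤ 2 * Real.sqrt c * Real.sqrt a * Real.cos (β / 2) :=
    mul_nonneg (by positivity) hcβ
  have hEc0 : 0 ≤ 2 * Real.sqrt a * Real.sqrt b * Real.cos (γ / 2) :=
    mul_nonneg (by positivity) hcγ
  have hEaL : 2 * Real.sqrt b * Real.sqrt c * Real.cos (α / 2) ≤ b + c :=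
    twobound17 hb.le hc.le (Real.cos_le_one _)
  have hEbL : 2 * Real.sqrt c * Real.sqrt a * Real.cos (β / 2) ≤ c + a :=
    twobound17 hc.le ha.le (Real.cos_le_one _)
  have hEcL : 2 * Real.sqrt a * Real.sqrt b * Real.cos (γ / 2) ≤ a + b :=
    twobound17 ha.le hb.le (Real.cos_le_one _)
  by_cases h1 : wA < 0 <;> by_cases h2 : wB < 0 <;> by_cases h3 : wC < 0 <;>
    simp only [h1, h2, h3, if_true, if_false]
  · linarith
  · linarith
  · linarith
  · -- wA < 0, wB ≥ 0, wC ≥ 0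
    have hrel := relA h1.le (not_lt.1 h2) (not_lt.1 h3)
    have := master17 ha.le hb.le hc.le hrel
    linarith
  · linarith
  · -- wB < 0, wA ≥ 0, wC ≥ 0
    have hrel := relB h2.le (not_lt.1 h3) (not_lt.1 h1)
    have := master17 hb.le hc.le ha.le hrel
    linarith
  · -- wC < 0, wA ≥ 0, wB ≥ 0
    have hrel := relC h3.le (not_lt.1 h1) (not_lt.1 h2)
    have := master17 hc.le ha.le hb.le hrel
    linarith
  · -- all ≥ 0, one equals 0
    rcases hout with hz | hz | hz
    · have hz0 : wA = 0 := le_antisymm hz (not_lt.1 h1)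
      have hpi := piA hz0 (not_lt.1 h2) (not_lt.1 h3)
      have hrel := relA hz (not_lt.1 h2) (not_lt.1 h3)
      have hm := master17 ha.le hb.le hc.le hrel
      have hEa : 2 * Real.sqrt b * Real.sqrt c * Real.cos (α / 2) = 0 := by
        rw [hpi, Real.cos_pi_div_two]; ring
      linarith
    · have hz0 : wB = 0 := le_antisymm hz (not_lt.1 h2)
      have hpi := piB hz0 (not_lt.1 h3) (not_lt.1 h1)
      have hrel := relB hz (not_lt.1 h3) (not_lt.1 h1)
      have hm := master17 hb.le hc.le ha.le hrel
      have hEb : 2 * Real.sqrt c * Real.sqrt a * Real.cos (β / 2) = 0 := by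
        rw [hpi, Real.cos_pi_div_two]; ring
      linarith
    · have hz0 : wC = 0 := le_antisymm hz (not_lt.1 h3)
      have hpi := piC hz0 (not_lt.1 h1) (not_lt.1 h2)
      have hrel := relC hz (not_lt.1 h1) (not_lt.1 h2)
      have hm := master17 hc.le ha.le hb.le hrel
      have hEc : 2 * Real.sqrt a * Real.sqrt b * Real.cos (γ / 2) = 0 := by
        rw [hpi, Real.cos_pi_div_two]; ring
      linarith

end

open EuclideanGeometry

theorem statement17 (A B C M : EuclideanSpace ℝ (Fin 2))
    (hABC : AffineIndependent ℝ ![A, B, C])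
    (wA wB wC : ℝ) (hw : wA + wB + wC = 1)
    (hM : M = wA • A + wB • B + wC • C)
    (hMA : M ≠ A) (hMB : M ≠ B) (hMC : M ≠ C)
    (hout : wA ≤ 0 ∨ wB ≤ 0 ∨ wC ≤ 0) :
    dist M A + dist M B + dist M C ≥
      (Real.sqrt (dist M C / dist M B) + Real.sqrt (dist M B / dist M C)) *
        (if wA < 0 then
            -(2 * dist M B * dist M C / (dist M B + dist M C) * Real.cos (∠ B M C / 2))
          else 2 * dist M B * dist M C / (dist M B + dist M C) * Real.cos (∠ B M C / 2)) +
      (Real.sqrt (dist M C / dist M A) + Real.sqrt (dist M A / dist M C)) *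
        (if wB < 0 then
            -(2 * dist M C * dist M A / (dist M C + dist M A) * Real.cos (∠ C M A / 2))
          else 2 * dist M C * dist M A / (dist M C + dist M A) * Real.cos (∠ C M A / 2)) +
      (Real.sqrt (dist M A / dist M B) + Real.sqrt (dist M B / dist M A)) *
        (if wC < 0 then
            -(2 * dist M A * dist M B / (dist M A + dist M B) * Real.cos (∠ A M B / 2))
          else 2 * dist M A * dist M B / (dist M A + dist M B) * Real.cos (∠ A M B / 2)) := by
  have hncol : ¬Collinear ℝ ({A, B, C} : Set (EuclideanSpace ℝ (Fin 2))) :=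
    affineIndependent_iff_not_collinear_set.1 hABC
  have ha0 : 0 < dist M A := dist_pos.2 hMA
  have hb0 : 0 < dist M B := dist_pos.2 hMB
  have hc0 : 0 < dist M C := dist_pos.2 hMC
  have hsetBCA : ({B, C, A} : Set (EuclideanSpace ℝ (Fin 2))) = {A, B, C} := by
    ext x; constructor <;> (intro h; simp at h ⊢; tauto)
  have hsetCAB : ({C, A, B} : Set (EuclideanSpace ℝ (Fin 2))) = {A, B, C} := by
    ext x; constructor <;> (intro h; simp at h ⊢; tauto)
  have hncol2 : ¬Collinear ℝ ({B, C, A} : Set (EuclideanSpace ℝ (Fin 2))) := by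
    rwa [hsetBCA]
  have hncol3 : ¬Collinear ℝ ({C, A, B} : Set (EuclideanSpace ℝ (Fin 2))) := by
    rwa [hsetCAB]
  have hw2 : wB + wC + wA = 1 := by linarith
  have hw3 : wC + wA + wB = 1 := by linarith
  have hM2 : M = wB • B + wC • C + wA • A := by rw [hM]; module
  have hM3 : M = wC • C + wA • A + wB • B := by rw [hM]; module
  have hT1 : (Real.sqrt (dist M C / dist M B) + Real.sqrt (dist M B / dist M C)) *
      (if wA < 0 then
          -(2 * dist M B * dist M C / (dist M B + dist M C) * Real.cos (∠ B M C / 2))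
        else 2 * dist M B * dist M C / (dist M B + dist M C) * Real.cos (∠ B M C / 2))
      = (if wA < 0 then
          -(2 * Real.sqrt (dist M B) * Real.sqrt (dist M C) * Real.cos (∠ B M C / 2))
        else 2 * Real.sqrt (dist M B) * Real.sqrt (dist M C) * Real.cos (∠ B M C / 2)) := by
    split_ifs with h
    · rw [mul_neg, coefsimp17 hb0 hc0 _]
    · exact coefsimp17 hb0 hc0 _
  have hT2 : (Real.sqrt (dist M C / dist M A) + Real.sqrt (dist M A / dist M C)) *
      (if wB < 0 then
          -(2 * dist M C * dist M A / (dist M C + dist M A) * Real.cos (∠ C M A / 2))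
        else 2 * dist M C * dist M A / (dist M C + dist M A) * Real.cos (∠ C M A / 2))
      = (if wB < 0 then
          -(2 * Real.sqrt (dist M C) * Real.sqrt (dist M A) * Real.cos (∠ C M A / 2))
        else 2 * Real.sqrt (dist M C) * Real.sqrt (dist M A) * Real.cos (∠ C M A / 2)) := by
    rw [add_comm (Real.sqrt (dist M C / dist M A)) (Real.sqrt (dist M A / dist M C))]
    split_ifs with h
    · rw [mul_neg, coefsimp17 hc0 ha0 _]
    · exact coefsimp17 hc0 ha0 _
  have hT3 : (Real.sqrt (dist M A / dist M B) + Real.sqrt (dist M B / dist M A)) *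
      (if wC < 0 then
          -(2 * dist M A * dist M B / (dist M A + dist M B) * Real.cos (∠ A M B / 2))
        else 2 * dist M A * dist M B / (dist M A + dist M B) * Real.cos (∠ A M B / 2))
      = (if wC < 0 then
          -(2 * Real.sqrt (dist M A) * Real.sqrt (dist M B) * Real.cos (∠ A M B / 2))
        else 2 * Real.sqrt (dist M A) * Real.sqrt (dist M B) * Real.cos (∠ A M B / 2)) := by
    rw [add_comm (Real.sqrt (dist M A / dist M B)) (Real.sqrt (dist M B / dist M A))]
    split_ifs with h
    · rw [mul_neg, coefsimp17 ha0 hb0 _]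
    · exact coefsimp17 ha0 hb0 _
  rw [ge_iff_le, hT1, hT2, hT3]
  exact mainineq17 ha0 hb0 hc0
    (angle_nonneg B M C) (angle_le_pi B M C)
    (angle_nonneg C M A) (angle_le_pi C M A)
    (angle_nonneg A M B) (angle_le_pi A M B)
    hw
    (fun h1 h2 h3 => angle_rel17 hncol hw hM hMA hMB hMC h1 h2 h3)
    (fun h1 h2 h3 => angle_rel17 hncol2 hw2 hM2 hMB hMC hMA h1 h2 h3)
    (fun h1 h2 h3 => angle_rel17 hncol3 hw3 hM3 hMC hMA hMB h1 h2 h3)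
    (fun h1 h2 h3 => sbtw_pi17 hw hM hMB hMC h1 h2 h3)
    (fun h1 h2 h3 => sbtw_pi17 hw2 hM2 hMC hMA h1 h2 h3)
    (fun h1 h2 h3 => sbtw_pi17 hw3 hM3 hMA hMB h1 h2 h3)
    hout
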